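/- Let uv be an edge of a finite simple graph G and let H be the 3-subdivision of uv. Suppose that no edge of G is γ-critical, and that each of u and v belongs to some minimum dominating set of G. Then no edge of H is γ-critical; in particular the bondage number of H is at least 2. -/
import Mathlib


open SimpleGraph

/-- `S` is a dominating set of `G`. -/
def IsDomSet {V : Type*} (G : SimpleGraph V) (S : Finset V) : Prop :=
  ∀ v : V, v ∈ S ∨ ∃ u ∈ S, G.Adj u v

/-- The domination number `γ(G)`. -/
noncomputable def domNum {V : Type*} (G : SimpleGraph V) : ℕ :=
  sInf {n | ∃ S : Finset V, IsDomSet G S ∧ S.card = n}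

/-- `C` is a vertex cover of `G`. -/
def IsVC {V : Type*} (G : SimpleGraph V) (C : Finset V) : Prop :=
  ∀ e ∈ G.edgeSet, ∃ x ∈ C, x ∈ e

/-- The vertex cover number `τ(G)`. -/
noncomputable def tau {V : Type*} (G : SimpleGraph V) : ℕ :=
  sInf {n | ∃ C : Finset V, IsVC G C ∧ C.card = n}

/-- `S` is an independent set of `G`. -/
def IsIndep {V : Type*} (G : SimpleGraph V) (S : Finset V) : Prop :=
  ∀ a ∈ S, ∀ b ∈ S, ¬ G.Adj a b

/-- The independence number `α(G)`. -/
noncomputable def indepNum {V : Type*} (G : SimpleGraph V) : ℕ :=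
  sSup {n | ∃ S : Finset V, IsIndep G S ∧ S.card = n}

/-- The bondage number `b(G)`. -/
noncomputable def bondage {V : Type*} (G : SimpleGraph V) : ℕ :=
  sInf {n | ∃ E' : Finset (Sym2 V), ↑E' ⊆ G.edgeSet ∧ E'.card = n ∧
    domNum (G.deleteEdges ↑E') = domNum G + 1}

/-- The graph `G_v+u` obtained from `G` by adding one new vertex (`none`) adjacent only to `v`. -/
def addLeaf {V : Type*} (G : SimpleGraph V) (v : V) : SimpleGraph (Option V) :=
  SimpleGraph.fromRel (fun x y =>
    (∃ a b, x = some a ∧ y = some b ∧ G.Adj a b) ∨ (x = some v ∧ y = none))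

/-- The graph `G_A+` obtained from `G` by adding, for each `v ∈ A`, one new pendant
vertex adjacent only to `v`. -/
def addLeaves {V : Type*} (G : SimpleGraph V) (A : Finset V) :
    SimpleGraph (V ⊕ {x // x ∈ A}) :=
  SimpleGraph.fromRel (fun x y =>
    (∃ a b, x = Sum.inl a ∧ y = Sum.inl b ∧ G.Adj a b) ∨
    (∃ a : {x // x ∈ A}, x = Sum.inl a.1 ∧ y = Sum.inr a))

/-- The `3`-subdivision of the edge `uv` of `G`: the edge `uv` is deleted, three new
vertices `u' = Sum.inr 0`, `w = Sum.inr 1`, `v' = Sum.inr 2` are added, together with the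
four edges `u u'`, `u' w`, `w v'`, `v' v`. -/
def subdiv3 {V : Type*} (G : SimpleGraph V) (u v : V) : SimpleGraph (V ⊕ Fin 3) :=
  SimpleGraph.fromRel (fun x y =>
    match x, y with
    | Sum.inl a, Sum.inl b => G.Adj a b ∧ s(a, b) ≠ s(u, v)
    | Sum.inl a, Sum.inr i => (a = u ∧ i = 0) ∨ (a = v ∧ i = 2)
    | Sum.inr i, Sum.inr j => (i = 0 ∧ j = 1) ∨ (i = 1 ∧ j = 2)
    | _, _ => False)

set_option linter.unusedSectionVars false
set_option linter.unusedVariables false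

section Helpers

variable {V : Type*} [Fintype V] [DecidableEq V]

lemma isDomSet_univ (G : SimpleGraph V) : IsDomSet G Finset.univ :=
  fun v => Or.inl (Finset.mem_univ v)

lemma exists_min_domSet (G : SimpleGraph V) :
    ∃ S : Finset V, IsDomSet G S ∧ S.card = domNum G := by
  have hne : {n | ∃ S : Finset V, IsDomSet G S ∧ S.card = n}.Nonempty :=
    ⟨Finset.univ.card, Finset.univ, isDomSet_univ G, rfl⟩
  exact Nat.sInf_mem hne

lemma domNum_le (G : SimpleGraph V) {S : Finset V} (h : IsDomSet G S) :
    domNum G ≤ S.card := Nat.sInf_le ⟨S, h, rfl⟩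

lemma isDomSet_mono {G G' : SimpleGraph V} (h : G ≤ G') {S} (hS : IsDomSet G S) :
    IsDomSet G' S :=
  fun x => (hS x).imp id (fun ⟨d, hd, ha⟩ => ⟨d, hd, h ha⟩)

lemma domNum_anti {G G' : SimpleGraph V} (h : G ≤ G') : domNum G' ≤ domNum G := by
  obtain ⟨S, hS, hc⟩ := exists_min_domSet G
  exact hc ▸ domNum_le G' (isDomSet_mono h hS)

lemma domNum_le_deleteEdges (G : SimpleGraph V) (s : Set (Sym2 V)) :
    domNum G ≤ domNum (G.deleteEdges s) := domNum_anti (deleteEdges_le s)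

lemma domNum_deleteEdge_le (G : SimpleGraph V) (e : Sym2 V) :
    domNum (G.deleteEdges {e}) ≤ domNum G + 1 := by
  obtain ⟨S, hS, hc⟩ := exists_min_domSet G
  induction e using Sym2.ind with
  | _ x y =>
    by_cases hx : x ∈ S
    · have hdom : IsDomSet (G.deleteEdges {s(x,y)}) (insert y S) := by
        intro z
        rcases hS z with hz | ⟨d, hd, ha⟩
        · exact Or.inl (Finset.mem_insert_of_mem hz)
        · by_cases he : s(d, z) = s(x, y)
          · rw [Sym2.eq_iff] at he
            rcases he with ⟨rfl, rfl⟩ | ⟨rfl, rfl⟩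
            · exact Or.inl (Finset.mem_insert_self _ _)
            · exact Or.inl (Finset.mem_insert_of_mem hx)
          · exact Or.inr ⟨d, Finset.mem_insert_of_mem hd,
              by rw [deleteEdges_adj]; exact ⟨ha, by simpa using he⟩⟩
      exact le_trans (domNum_le _ hdom) (by simpa [hc] using Finset.card_insert_le y S)
    · have hdom : IsDomSet (G.deleteEdges {s(x,y)}) (insert x S) := by
        intro z
        rcases hS z with hz | ⟨d, hd, ha⟩
        · exact Or.inl (Finset.mem_insert_of_mem hz)
        · by_cases he : s(d, z) = s(x, y)
          · rw [Sym2.eq_iff] at he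
            rcases he with ⟨rfl, rfl⟩ | ⟨rfl, rfl⟩
            · exact absurd hd hx
            · exact Or.inl (Finset.mem_insert_self _ _)
          · exact Or.inr ⟨d, Finset.mem_insert_of_mem hd,
              by rw [deleteEdges_adj]; exact ⟨ha, by simpa using he⟩⟩
      exact le_trans (domNum_le _ hdom) (by simpa [hc] using Finset.card_insert_le x S)

lemma deleteEdges_insert_eq (G : SimpleGraph V) (e : Sym2 V) (s : Set (Sym2 V)) :
    G.deleteEdges (insert e s) = (G.deleteEdges s).deleteEdges {e} := by
  ext a b
  simp only [deleteEdges_adj, Set.mem_insert_iff, Set.mem_singleton_iff]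
  tauto

lemma isDomSet_bot {S : Finset V} (h : IsDomSet (⊥ : SimpleGraph V) S) :
    S = Finset.univ := by
  apply Finset.eq_univ_iff_forall.mpr
  intro x
  rcases h x with hx | ⟨d, _, ha⟩
  · exact hx
  · exact absurd ha (by simp)

lemma domNum_bot : domNum (⊥ : SimpleGraph V) = Fintype.card V := by
  obtain ⟨S, hS, hc⟩ := exists_min_domSet (⊥ : SimpleGraph V)
  rw [← hc, isDomSet_bot hS, Finset.card_univ]

lemma deleteEdges_edgeSet_eq_bot (G : SimpleGraph V) : G.deleteEdges G.edgeSet = ⊥ := by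
  ext a b
  simp only [deleteEdges_adj, mem_edgeSet, bot_adj, iff_false]
  tauto

lemma exists_bondage_witness (G : SimpleGraph V) (hlt : domNum G + 1 ≤ Fintype.card V) :
    ∃ E' : Finset (Sym2 V), ↑E' ⊆ G.edgeSet ∧
      domNum (G.deleteEdges ↑E') = domNum G + 1 := by
  classical
  set T : Set ℕ := {n | ∃ E' : Finset (Sym2 V), ↑E' ⊆ G.edgeSet ∧ E'.card = n ∧
      domNum G + 1 ≤ domNum (G.deleteEdges ↑E')} with hT
  have hne : T.Nonempty := by
    refine ⟨_, G.edgeSet.toFinite.toFinset, ?_, rfl, ?_⟩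
    · rw [Set.Finite.coe_toFinset]
    · rw [Set.Finite.coe_toFinset, deleteEdges_edgeSet_eq_bot, domNum_bot]
      exact hlt
  obtain ⟨E', hsub, hcard, hge⟩ := Nat.sInf_mem hne
  have h0 : E'.Nonempty := by
    rcases Finset.eq_empty_or_nonempty E' with rfl | h
    · exfalso
      rw [Finset.coe_empty, deleteEdges_empty] at hge
      omega
    · exact h
  obtain ⟨e, he⟩ := h0
  have hlt' : (E'.erase e).card < sInf T := by
    rw [← hcard]
    exact Finset.card_erase_lt_of_mem he
  have hnot : ¬ (domNum G + 1 ≤ domNum (G.deleteEdges ↑(E'.erase e))) := by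
    intro h
    exact Nat.notMem_of_lt_sInf hlt'
      ⟨E'.erase e, le_trans (Finset.coe_subset.mpr (Finset.erase_subset _ _)) hsub, rfl, h⟩
  have hsplit : G.deleteEdges ↑E' = (G.deleteEdges ↑(E'.erase e)).deleteEdges {e} := by
    conv_lhs => rw [← Finset.insert_erase he]
    rw [Finset.coe_insert, deleteEdges_insert_eq]
  have h1 := domNum_deleteEdge_le (G.deleteEdges ↑(E'.erase e)) e
  refine ⟨E', hsub, le_antisymm ?_ hge⟩
  rw [hsplit]
  omega

end Helpers

section Subdiv
open Sum
variable {V : Type*} [Fintype V] [DecidableEq V] (G : SimpleGraph V) (u v : V)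

lemma subdiv3_adj_ll {a b : V} :
    (subdiv3 G u v).Adj (inl a) (inl b) ↔ G.Adj a b ∧ s(a,b) ≠ s(u,v) := by
  constructor
  · rintro ⟨hne, h | h⟩
    · exact h
    · exact ⟨h.1.symm, by rw [Sym2.eq_swap]; exact h.2⟩
  · rintro ⟨h1, h2⟩
    exact ⟨by simpa using h1.ne, Or.inl ⟨h1, h2⟩⟩

lemma subdiv3_adj_lr {a : V} {i : Fin 3} :
    (subdiv3 G u v).Adj (inl a) (inr i) ↔ (a = u ∧ i = 0) ∨ (a = v ∧ i = 2) := by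
  constructor
  · rintro ⟨hne, h | h⟩
    · exact h
    · exact h.elim
  · intro h
    exact ⟨by simp, Or.inl h⟩

lemma subdiv3_adj_rl {a : V} {i : Fin 3} :
    (subdiv3 G u v).Adj (inr i) (inl a) ↔ (a = u ∧ i = 0) ∨ (a = v ∧ i = 2) := by
  rw [adj_comm]; exact subdiv3_adj_lr G u v

lemma subdiv3_adj_rr {i j : Fin 3} :
    (subdiv3 G u v).Adj (inr i) (inr j) ↔
      (i = 0 ∧ j = 1) ∨ (i = 1 ∧ j = 2) ∨ (i = 1 ∧ j = 0) ∨ (i = 2 ∧ j = 1) := by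
  constructor
  · rintro ⟨hne, h | h⟩
    · tauto
    · tauto
  · rintro (⟨rfl, rfl⟩ | ⟨rfl, rfl⟩ | ⟨rfl, rfl⟩ | ⟨rfl, rfl⟩)
    · exact ⟨by simp, Or.inl (by tauto)⟩
    · exact ⟨by simp, Or.inl (by tauto)⟩
    · exact ⟨by simp, Or.inr (by tauto)⟩
    · exact ⟨by simp, Or.inr (by tauto)⟩

lemma sym2_inl_ne {a b c d : V} (h : s(a,b) ≠ s(c,d)) :
    s((inl a : V ⊕ Fin 3), inl b) ≠ s(inl c, inl d) := by
  simp only [ne_eq, Sym2.eq_iff, Sum.inl.injEq] at h ⊢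
  exact h

lemma isDomSet_lift (K : SimpleGraph (V ⊕ Fin 3)) (S : Finset V) (t : Fin 3)
    (h1 : ∀ x : V, x ∈ S ∨ (∃ d ∈ S, K.Adj (inl d) (inl x)) ∨ K.Adj (inr t) (inl x))
    (h2 : ∀ i : Fin 3, i = t ∨ (∃ d ∈ S, K.Adj (inl d) (inr i)) ∨ K.Adj (inr t) (inr i)) :
    IsDomSet K (insert (inr t) (S.image (inl : V → V ⊕ Fin 3))) := by
  intro z
  cases z with
  | inl x =>
    rcases h1 x with hx | ⟨d, hd, ha⟩ | ha
    · exact Or.inl (Finset.mem_insert_of_mem (Finset.mem_image_of_mem (inl : V → V ⊕ Fin 3) hx))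
    · exact Or.inr ⟨inl d, Finset.mem_insert_of_mem (Finset.mem_image_of_mem (inl : V → V ⊕ Fin 3) hd), ha⟩
    · exact Or.inr ⟨inr t, Finset.mem_insert_self _ _, ha⟩
  | inr i =>
    rcases h2 i with rfl | ⟨d, hd, ha⟩ | ha
    · exact Or.inl (Finset.mem_insert_self _ _)
    · exact Or.inr ⟨inl d, Finset.mem_insert_of_mem (Finset.mem_image_of_mem (inl : V → V ⊕ Fin 3) hd), ha⟩
    · exact Or.inr ⟨inr t, Finset.mem_insert_self _ _, ha⟩

lemma lift_card (S : Finset V) (t : Fin 3) :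
    (insert (inr t : V ⊕ Fin 3) (S.image (inl : V → V ⊕ Fin 3))).card ≤ S.card + 1 :=
  le_trans (Finset.card_insert_le _ _) (Nat.succ_le_succ Finset.card_image_le)

lemma genU (huv : G.Adj u v) (e' : Sym2 (V ⊕ Fin 3)) (S : Finset V) (G' : SimpleGraph V)
    (hS : IsDomSet G' S) (hle : G' ≤ G) (huS : u ∈ S)
    (hyp1 : ∀ c x : V, G'.Adj c x → s(c,x) ≠ s(u,v) → s((inl c : V ⊕ Fin 3), inl x) ≠ e')
    (hyp2 : s((inl u : V ⊕ Fin 3), inr 0) ≠ e')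
    (hyp3 : s((inr 2 : V ⊕ Fin 3), inl v) ≠ e')
    (hyp4 : s((inr 2 : V ⊕ Fin 3), inr 1) ≠ e') :
    domNum ((subdiv3 G u v).deleteEdges {e'}) ≤ S.card + 1 := by
  classical
  set K := (subdiv3 G u v).deleteEdges {e'} with hK
  have mk : ∀ {x y : V ⊕ Fin 3}, (subdiv3 G u v).Adj x y → s(x,y) ≠ e' → K.Adj x y := by
    intro x y ha hne
    rw [hK, SimpleGraph.deleteEdges_adj]
    exact ⟨ha, by simpa using hne⟩
  have h1 : ∀ x : V, x ∈ S ∨ (∃ d ∈ S, K.Adj (inl d) (inl x)) ∨ K.Adj (inr 2) (inl x) := by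
    intro x
    rcases hS x with hx | ⟨d, hd, ha⟩
    · exact Or.inl hx
    · by_cases hc : s(d, x) = s(u, v)
      · rw [Sym2.eq_iff] at hc
        rcases hc with ⟨hd1, hx1⟩ | ⟨hd1, hx1⟩
        · refine Or.inr (Or.inr ?_)
          rw [hx1]
          exact mk ((subdiv3_adj_rl G u v).mpr (Or.inr ⟨rfl, rfl⟩)) hyp3
        · exact Or.inl (hx1 ▸ huS)
      · exact Or.inr (Or.inl ⟨d, hd, mk ((subdiv3_adj_ll G u v).mpr ⟨hle ha, hc⟩) (hyp1 d x ha hc)⟩)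
  have h2 : ∀ i : Fin 3, i = 2 ∨ (∃ d ∈ S, K.Adj (inl d) (inr i)) ∨ K.Adj (inr 2) (inr i) := by
    intro i
    fin_cases i
    · exact Or.inr (Or.inl ⟨u, huS, mk ((subdiv3_adj_lr G u v).mpr (Or.inl ⟨rfl, rfl⟩)) hyp2⟩)
    · exact Or.inr (Or.inr (mk ((subdiv3_adj_rr G u v).mpr (by tauto)) hyp4))
    · exact Or.inl rfl
  exact le_trans (domNum_le _ (isDomSet_lift K S 2 h1 h2)) (lift_card S 2)

lemma genV (huv : G.Adj u v) (e' : Sym2 (V ⊕ Fin 3)) (S : Finset V) (G' : SimpleGraph V)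
    (hS : IsDomSet G' S) (hle : G' ≤ G) (hvS : v ∈ S)
    (hyp1 : ∀ c x : V, G'.Adj c x → s(c,x) ≠ s(u,v) → s((inl c : V ⊕ Fin 3), inl x) ≠ e')
    (hyp2 : s((inl v : V ⊕ Fin 3), inr 2) ≠ e')
    (hyp3 : s((inr 0 : V ⊕ Fin 3), inl u) ≠ e')
    (hyp4 : s((inr 0 : V ⊕ Fin 3), inr 1) ≠ e') :
    domNum ((subdiv3 G u v).deleteEdges {e'}) ≤ S.card + 1 := by
  classical
  set K := (subdiv3 G u v).deleteEdges {e'} with hK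
  have mk : ∀ {x y : V ⊕ Fin 3}, (subdiv3 G u v).Adj x y → s(x,y) ≠ e' → K.Adj x y := by
    intro x y ha hne
    rw [hK, SimpleGraph.deleteEdges_adj]
    exact ⟨ha, by simpa using hne⟩
  have h1 : ∀ x : V, x ∈ S ∨ (∃ d ∈ S, K.Adj (inl d) (inl x)) ∨ K.Adj (inr 0) (inl x) := by
    intro x
    rcases hS x with hx | ⟨d, hd, ha⟩
    · exact Or.inl hx
    · by_cases hc : s(d, x) = s(u, v)
      · rw [Sym2.eq_iff] at hc
        rcases hc with ⟨hd1, hx1⟩ | ⟨hd1, hx1⟩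
        · exact Or.inl (hx1 ▸ hvS)
        · refine Or.inr (Or.inr ?_)
          rw [hx1]
          exact mk ((subdiv3_adj_rl G u v).mpr (Or.inl ⟨rfl, rfl⟩)) hyp3
      · exact Or.inr (Or.inl ⟨d, hd, mk ((subdiv3_adj_ll G u v).mpr ⟨hle ha, hc⟩) (hyp1 d x ha hc)⟩)
  have h2 : ∀ i : Fin 3, i = 0 ∨ (∃ d ∈ S, K.Adj (inl d) (inr i)) ∨ K.Adj (inr 0) (inr i) := by
    intro i
    fin_cases i
    · exact Or.inl rfl
    · exact Or.inr (Or.inr (mk ((subdiv3_adj_rr G u v).mpr (by tauto)) hyp4))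
    · exact Or.inr (Or.inl ⟨v, hvS, mk ((subdiv3_adj_lr G u v).mpr (Or.inr ⟨rfl, rfl⟩)) hyp2⟩)
  exact le_trans (domNum_le _ (isDomSet_lift K S 0 h1 h2)) (lift_card S 0)

lemma genW (e' : Sym2 (V ⊕ Fin 3)) (S : Finset V) (G' : SimpleGraph V)
    (hS : IsDomSet G' S) (hle : G' ≤ G)
    (hne_uv : ∀ c x : V, G'.Adj c x → c ∈ S → s(c,x) ≠ s(u,v))
    (hyp1 : ∀ c x : V, G'.Adj c x → s(c,x) ≠ s(u,v) → s((inl c : V ⊕ Fin 3), inl x) ≠ e')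
    (hyp2 : s((inr 1 : V ⊕ Fin 3), inr 0) ≠ e')
    (hyp3 : s((inr 1 : V ⊕ Fin 3), inr 2) ≠ e') :
    domNum ((subdiv3 G u v).deleteEdges {e'}) ≤ S.card + 1 := by
  classical
  set K := (subdiv3 G u v).deleteEdges {e'} with hK
  have mk : ∀ {x y : V ⊕ Fin 3}, (subdiv3 G u v).Adj x y → s(x,y) ≠ e' → K.Adj x y := by
    intro x y ha hne
    rw [hK, SimpleGraph.deleteEdges_adj]
    exact ⟨ha, by simpa using hne⟩
  have h1 : ∀ x : V, x ∈ S ∨ (∃ d ∈ S, K.Adj (inl d) (inl x)) ∨ K.Adj (inr 1) (inl x) := by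
    intro x
    rcases hS x with hx | ⟨d, hd, ha⟩
    · exact Or.inl hx
    · have hc := hne_uv d x ha hd
      exact Or.inr (Or.inl ⟨d, hd, mk ((subdiv3_adj_ll G u v).mpr ⟨hle ha, hc⟩) (hyp1 d x ha hc)⟩)
  have h2 : ∀ i : Fin 3, i = 1 ∨ (∃ d ∈ S, K.Adj (inl d) (inr i)) ∨ K.Adj (inr 1) (inr i) := by
    intro i
    fin_cases i
    · exact Or.inr (Or.inr (mk ((subdiv3_adj_rr G u v).mpr (by tauto)) hyp2))
    · exact Or.inl rfl
    · exact Or.inr (Or.inr (mk ((subdiv3_adj_rr G u v).mpr (by tauto)) hyp3))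
  exact le_trans (domNum_le _ (isDomSet_lift K S 1 h1 h2)) (lift_card S 1)

lemma subdiv3_lower (huv : G.Adj u v) {D : Finset (V ⊕ Fin 3)}
    (hD : IsDomSet (subdiv3 G u v) D) :
    ∃ D' : Finset V, IsDomSet G D' ∧ D'.card + 1 ≤ D.card := by
  classical
  set φ : V ⊕ Fin 3 → V := Sum.elim id (fun i => if i = 2 then v else u) with hφ
  have hφl : ∀ a : V, φ (inl a) = a := fun a => rfl
  have hφ0 : φ (inr 0) = u := by simp [hφ]
  have hφ2 : φ (inr 2) = v := by simp [hφ]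
  have hcard : ∀ c : V ⊕ Fin 3, c ∈ D → ((D.erase c).image φ).card + 1 ≤ D.card := by
    intro c hc
    have h1 : (D.erase c).card < D.card := Finset.card_erase_lt_of_mem hc
    have h2 : ((D.erase c).image φ).card ≤ (D.erase c).card := Finset.card_image_le
    omega
  have hmem : ∀ (c z : V ⊕ Fin 3), z ∈ D → z ≠ c → φ z ∈ (D.erase c).image φ := by
    intro c z hz hne
    exact Finset.mem_image_of_mem φ (Finset.mem_erase.mpr ⟨hne, hz⟩)
  by_cases hw : (inr 1 : V ⊕ Fin 3) ∈ D
  · refine ⟨(D.erase (inr 1)).image φ, ?_, hcard _ hw⟩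
    intro x
    rcases hD (inl x) with hx | ⟨d, hd, ha⟩
    · exact Or.inl (hφl x ▸ hmem _ _ hx (by simp))
    · cases d with
      | inl b =>
        exact Or.inr ⟨b, hφl b ▸ hmem _ _ hd (by simp),
          ((subdiv3_adj_ll G u v).mp ha).1⟩
      | inr i =>
        rcases (subdiv3_adj_rl G u v).mp ha with ⟨hx1, hi⟩ | ⟨hx1, hi⟩
        · subst hi
          exact Or.inl (hx1 ▸ (hφ0 ▸ hmem _ _ hd (by simp)))
        · subst hi
          exact Or.inl (hx1 ▸ (hφ2 ▸ hmem _ _ hd (by simp)))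
  · rcases hD (inr 1) with h | ⟨d, hd, ha⟩
    · exact absurd h hw
    · cases d with
      | inl b =>
        rcases (subdiv3_adj_lr G u v).mp ha with ⟨_, hi⟩ | ⟨_, hi⟩
        · exact absurd hi (by decide)
        · exact absurd hi (by decide)
      | inr i =>
        have hi : i = 0 ∨ i = 2 := by
          rcases (subdiv3_adj_rr G u v).mp ha with ⟨h1, _⟩ | ⟨_, h2⟩ | ⟨_, h2⟩ | ⟨h1, _⟩
          · exact Or.inl h1
          · exact absurd h2 (by decide)
          · exact absurd h2 (by decide)
          · exact Or.inr h1
        rcases hi with rfl | rfl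
        · -- u' = inr 0 ∈ D, w ∉ D
          refine ⟨(D.erase (inr 0)).image φ, ?_, hcard _ hd⟩
          have hvD' : v ∈ (D.erase (inr 0)).image φ := by
            by_cases h2 : (inr 2 : V ⊕ Fin 3) ∈ D
            · exact hφ2 ▸ hmem _ _ h2 (by simp)
            · rcases hD (inr 2) with h | ⟨d', hd', ha'⟩
              · exact absurd h h2
              · cases d' with
                | inl b =>
                  rcases (subdiv3_adj_lr G u v).mp ha' with ⟨_, hi'⟩ | ⟨hb, _⟩
                  · exact absurd hi' (by decide)
                  · exact hb ▸ (hφl b ▸ hmem _ _ hd' (by simp))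
                | inr j =>
                  have : j = 1 := by
                    rcases (subdiv3_adj_rr G u v).mp ha' with ⟨_, h'⟩ | ⟨h', _⟩ | ⟨h', h''⟩ | ⟨_, h'⟩
                    · exact absurd h' (by decide)
                    · exact h'
                    · exact absurd h'' (by decide)
                    · exact absurd h' (by decide)
                  rw [this] at hd'
                  exact absurd hd' hw
          intro x
          rcases hD (inl x) with hx | ⟨d, hd', ha'⟩
          · exact Or.inl (hφl x ▸ hmem _ _ hx (by simp))
          · cases d with
            | inl b =>
              exact Or.inr ⟨b, hφl b ▸ hmem _ _ hd' (by simp),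
                ((subdiv3_adj_ll G u v).mp ha').1⟩
            | inr i' =>
              rcases (subdiv3_adj_rl G u v).mp ha' with ⟨hx1, _⟩ | ⟨hx1, _⟩
              · exact Or.inr ⟨v, hvD', hx1 ▸ huv.symm⟩
              · exact Or.inl (hx1 ▸ hvD')
        · -- v' = inr 2 ∈ D, w ∉ D
          refine ⟨(D.erase (inr 2)).image φ, ?_, hcard _ hd⟩
          have huD' : u ∈ (D.erase (inr 2)).image φ := by
            by_cases h0 : (inr 0 : V ⊕ Fin 3) ∈ D
            · exact hφ0 ▸ hmem _ _ h0 (by simp)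
            · rcases hD (inr 0) with h | ⟨d', hd', ha'⟩
              · exact absurd h h0
              · cases d' with
                | inl b =>
                  rcases (subdiv3_adj_lr G u v).mp ha' with ⟨hb, _⟩ | ⟨_, hi'⟩
                  · exact hb ▸ (hφl b ▸ hmem _ _ hd' (by simp))
                  · exact absurd hi' (by decide)
                | inr j =>
                  have : j = 1 := by
                    rcases (subdiv3_adj_rr G u v).mp ha' with ⟨_, h'⟩ | ⟨_, h'⟩ | ⟨h', _⟩ | ⟨_, h'⟩
                    · exact absurd h' (by decide)
                    · exact absurd h' (by decide)
                    · exact h'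
                    · exact absurd h' (by decide)
                  rw [this] at hd'
                  exact absurd hd' hw
          intro x
          rcases hD (inl x) with hx | ⟨d, hd', ha'⟩
          · exact Or.inl (hφl x ▸ hmem _ _ hx (by simp))
          · cases d with
            | inl b =>
              exact Or.inr ⟨b, hφl b ▸ hmem _ _ hd' (by simp),
                ((subdiv3_adj_ll G u v).mp ha').1⟩
            | inr i' =>
              rcases (subdiv3_adj_rl G u v).mp ha' with ⟨hx1, _⟩ | ⟨hx1, _⟩
              · exact Or.inl (hx1 ▸ huD')
              · exact Or.inr ⟨u, huD', hx1 ▸ huv⟩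

theorem stmt8' (huv : G.Adj u v)
    (hG : ∀ e ∈ G.edgeSet, domNum (G.deleteEdges {e}) ≠ domNum G + 1)
    (hu : ∃ S : Finset V, IsDomSet G S ∧ S.card = domNum G ∧ u ∈ S)
    (hv : ∃ S : Finset V, IsDomSet G S ∧ S.card = domNum G ∧ v ∈ S) :
    (∀ e ∈ (subdiv3 G u v).edgeSet,
        domNum ((subdiv3 G u v).deleteEdges {e}) ≠ domNum (subdiv3 G u v) + 1) ∧
    2 ≤ bondage (subdiv3 G u v) := by
  classical
  obtain ⟨Su, hSu, hSuc, huSu⟩ := hu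
  obtain ⟨Sv, hSv, hSvc, hvSv⟩ := hv
  obtain ⟨Suv, hSuv, hSuvc'⟩ := exists_min_domSet (G.deleteEdges {s(u,v)})
  have hSuvc : Suv.card ≤ domNum G := by
    have h1 := domNum_deleteEdge_le G s(u,v)
    have h2 := hG s(u,v) (G.mem_edgeSet.mpr huv)
    omega
  have hle_uv : G.deleteEdges {s(u,v)} ≤ G := SimpleGraph.deleteEdges_le _
  have hW1 : ∀ c x : V, (G.deleteEdges {s(u,v)}).Adj c x → c ∈ Suv → s(c,x) ≠ s(u,v) := by
    intro c x hcx _ hc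
    rw [SimpleGraph.deleteEdges_adj] at hcx
    exact hcx.2 (by simpa using hc)
  have key : ∀ e ∈ (subdiv3 G u v).edgeSet,
      domNum ((subdiv3 G u v).deleteEdges {e}) ≤ domNum G + 1 := by
    intro e
    induction e using Sym2.ind with
    | _ x y =>
      intro he
      rw [SimpleGraph.mem_edgeSet] at he
      cases x with
      | inl a =>
        cases y with
        | inl b =>
          obtain ⟨hab, hneuv⟩ := (subdiv3_adj_ll G u v).mp he
          obtain ⟨S, hS, hSc⟩ := exists_min_domSet (G.deleteEdges {s(a,b)})
          have hScard : S.card ≤ domNum G := by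
            have h1 := domNum_deleteEdge_le G s(a,b)
            have h2 := hG s(a,b) (G.mem_edgeSet.mpr hab)
            omega
          have hle : G.deleteEdges {s(a,b)} ≤ G := SimpleGraph.deleteEdges_le _
          have hyp1 : ∀ c x : V, (G.deleteEdges {s(a,b)}).Adj c x → s(c,x) ≠ s(u,v) →
              s((Sum.inl c : V ⊕ Fin 3), Sum.inl x) ≠ s((Sum.inl a : V ⊕ Fin 3), Sum.inl b) := by
            intro c x hcx _
            rw [SimpleGraph.deleteEdges_adj] at hcx
            exact sym2_inl_ne (by simpa using hcx.2)
          by_cases huS : u ∈ S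
          · exact le_trans (genU G u v huv _ S _ hS hle huS hyp1
              (by simp [Sym2.eq_iff]) (by simp [Sym2.eq_iff]) (by simp [Sym2.eq_iff]))
              (by omega)
          by_cases hvS : v ∈ S
          · exact le_trans (genV G u v huv _ S _ hS hle hvS hyp1
              (by simp [Sym2.eq_iff]) (by simp [Sym2.eq_iff]) (by simp [Sym2.eq_iff]))
              (by omega)
          · have hne_uv : ∀ c x : V, (G.deleteEdges {s(a,b)}).Adj c x → c ∈ S →
                s(c,x) ≠ s(u,v) := by
              intro c x _ hcS hcontra
              rw [Sym2.eq_iff] at hcontra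
              rcases hcontra with ⟨h1, _⟩ | ⟨h1, _⟩
              · exact huS (h1 ▸ hcS)
              · exact hvS (h1 ▸ hcS)
            exact le_trans (genW G u v _ S _ hS hle hne_uv hyp1
              (by simp [Sym2.eq_iff]) (by simp [Sym2.eq_iff])) (by omega)
        | inr j =>
          exact le_trans (genW G u v _ Suv _ hSuv hle_uv hW1
            (by intro c x _ _; simp [Sym2.eq_iff])
            (by simp [Sym2.eq_iff]) (by simp [Sym2.eq_iff])) (by omega)
      | inr i =>
        cases y with
        | inl a =>
          exact le_trans (genW G u v _ Suv _ hSuv hle_uv hW1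
            (by intro c x _ _; simp [Sym2.eq_iff])
            (by simp [Sym2.eq_iff]) (by simp [Sym2.eq_iff])) (by omega)
        | inr j =>
          rcases (subdiv3_adj_rr G u v).mp he with ⟨rfl, rfl⟩ | ⟨rfl, rfl⟩ | ⟨rfl, rfl⟩ | ⟨rfl, rfl⟩
          · exact le_trans (genU G u v huv _ Su _ hSu le_rfl huSu
              (by intro c x _ _; simp [Sym2.eq_iff])
              (by simp [Sym2.eq_iff]) (by simp [Sym2.eq_iff])
              (by simp [Sym2.eq_iff, Fin.ext_iff])) (by omega)
          · exact le_trans (genV G u v huv _ Sv _ hSv le_rfl hvSv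
              (by intro c x _ _; simp [Sym2.eq_iff])
              (by simp [Sym2.eq_iff]) (by simp [Sym2.eq_iff])
              (by simp [Sym2.eq_iff, Fin.ext_iff])) (by omega)
          · exact le_trans (genU G u v huv _ Su _ hSu le_rfl huSu
              (by intro c x _ _; simp [Sym2.eq_iff])
              (by simp [Sym2.eq_iff]) (by simp [Sym2.eq_iff])
              (by simp [Sym2.eq_iff, Fin.ext_iff])) (by omega)
          · exact le_trans (genV G u v huv _ Sv _ hSv le_rfl hvSv
              (by intro c x _ _; simp [Sym2.eq_iff])
              (by simp [Sym2.eq_iff]) (by simp [Sym2.eq_iff])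
              (by simp [Sym2.eq_iff, Fin.ext_iff])) (by omega)
  have hlow : domNum G + 1 ≤ domNum (subdiv3 G u v) := by
    obtain ⟨D, hD, hDc⟩ := exists_min_domSet (subdiv3 G u v)
    obtain ⟨D', hD', hle'⟩ := subdiv3_lower G u v huv hD
    have := domNum_le G hD'
    omega
  have part1 : ∀ e ∈ (subdiv3 G u v).edgeSet,
      domNum ((subdiv3 G u v).deleteEdges {e}) ≠ domNum (subdiv3 G u v) + 1 := by
    intro e he
    have h1 := key e he
    omega
  refine ⟨part1, ?_⟩
  have hHedge : s((Sum.inr 0 : V ⊕ Fin 3), Sum.inr 1) ∈ (subdiv3 G u v).edgeSet :=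
    (subdiv3 G u v).mem_edgeSet.mpr ((subdiv3_adj_rr G u v).mpr (by tauto))
  have hup : domNum (subdiv3 G u v) ≤ domNum G + 1 :=
    le_trans (domNum_le_deleteEdges _ _) (key _ hHedge)
  have hlt : domNum (subdiv3 G u v) + 1 ≤ Fintype.card (V ⊕ Fin 3) := by
    have h1 : domNum G ≤ Fintype.card V := by
      have := domNum_le G (isDomSet_univ G)
      simpa using this
    have h2 : Fintype.card (V ⊕ Fin 3) = Fintype.card V + 3 := by simp
    omega
  obtain ⟨E0, hE0sub, hE0⟩ := exists_bondage_witness (subdiv3 G u v) hlt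
  have hBne : {n | ∃ E' : Finset (Sym2 (V ⊕ Fin 3)), ↑E' ⊆ (subdiv3 G u v).edgeSet ∧
      E'.card = n ∧ domNum ((subdiv3 G u v).deleteEdges ↑E')
        = domNum (subdiv3 G u v) + 1}.Nonempty := ⟨E0.card, E0, hE0sub, rfl, hE0⟩
  obtain ⟨E', hsub, hcardE, hdomE⟩ := Nat.sInf_mem hBne
  have h2le : 2 ≤ E'.card := by
    by_contra hcon
    push_neg at hcon
    have h01 : E'.card = 0 ∨ E'.card = 1 := by omega
    rcases h01 with h0 | h1
    · rw [Finset.card_eq_zero] at h0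
      subst h0
      rw [Finset.coe_empty, SimpleGraph.deleteEdges_empty] at hdomE
      omega
    · obtain ⟨e, rfl⟩ := Finset.card_eq_one.mp h1
      rw [Finset.coe_singleton] at hdomE
      have hein : e ∈ (subdiv3 G u v).edgeSet := hsub (by simp)
      exact part1 e hein hdomE
  unfold bondage
  exact hcardE ▸ h2le

end Subdiv

/-- If no edge of `G` is `γ`-critical and each of `u`, `v` belongs to some minimum
dominating set of `G`, then no edge of the `3`-subdivision `H` of the edge `uv` is
`γ`-critical; in particular `b(H) ≥ 2`. -/
theorem stmt8 {V : Type*} [Fintype V] [DecidableEq V] (G : SimpleGraph V)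
    (u v : V) (huv : G.Adj u v)
    (hG : ∀ e ∈ G.edgeSet, domNum (G.deleteEdges {e}) ≠ domNum G + 1)
    (hu : ∃ S : Finset V, IsDomSet G S ∧ S.card = domNum G ∧ u ∈ S)
    (hv : ∃ S : Finset V, IsDomSet G S ∧ S.card = domNum G ∧ v ∈ S) :
    (∀ e ∈ (subdiv3 G u v).edgeSet,
        domNum ((subdiv3 G u v).deleteEdges {e}) ≠ domNum (subdiv3 G u v) + 1) ∧
    2 ≤ bondage (subdiv3 G u v) := by
  exact stmt8' G u v huv hG hu hv
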